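/- Let t, d, e, r, k be positive integers with d dividing q−1 and gcd(d, e) = 1, and put s := (q−1)/d. Suppose q = q_0^m where m is even, q_0 is a prime power, and q_0 ≡ −1 (mod d). Then f(x) := x^r · h_k(x^{e(q−1)/d})^t is a permutation polynomial of F_q if and only if gcd(r, s) = 1, gcd(k, pd) = 1, and gcd(2r + (k−1)tes, 2d) = 2, where p is the characteristic of F_q. -/

import Mathlib

open Polynomial

private lemma int_gcd_shift (a b c : ℤ) : Int.gcd (a + b * c) b = Int.gcd a b := by
  apply Nat.dvd_antisymm <;> rw [Int.natCast_dvd_natCast.symm] <;> apply Int.dvd_coe_gcd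
  · have h1 : (Int.gcd (a + b * c) b : ℤ) ∣ (a + b * c) := Int.gcd_dvd_left _ _
    have h2 : (Int.gcd (a + b * c) b : ℤ) ∣ b := Int.gcd_dvd_right _ _
    simpa using Int.dvd_sub h1 (h2.mul_right c)
  · exact Int.gcd_dvd_right _ _
  · exact (Int.gcd_dvd_left a b).add ((Int.gcd_dvd_right a b).mul_right c)
  · exact Int.gcd_dvd_right _ _

/-- Let t, d, e, r, k > 0 with d ∣ q−1 and gcd(d, e) = 1, and put s := (q−1)/d.
Suppose q = q_0^m with m even, q_0 a prime power, q_0 ≡ −1 (mod d). Then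
f(x) := x^r · h_k(x^{e(q−1)/d})^t permutes F_q iff gcd(r, s) = 1, gcd(k, pd) = 1,
and gcd(2r + (k−1)tes, 2d) = 2, where p = char F_q. -/
theorem stmt_5 {F : Type*} [Field F] [Fintype F] {q q0 m p : ℕ}
    (hq : Fintype.card F = q) (hp : p.Prime) [CharP F p]
    {t d e r k : ℕ} (ht : 0 < t) (hd : 0 < d) (he : 0 < e) (hr : 0 < r) (hk : 0 < k)
    (hdvd : d ∣ q - 1) (hed : Nat.gcd d e = 1) (s : ℕ) (hs : s = (q - 1) / d)
    (hq0 : IsPrimePow q0) (hqm : q = q0 ^ m) (hme : Even m) (hcong : d ∣ q0 + 1) :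
    Function.Bijective (fun c : F =>
      (X ^ r * ((∑ i ∈ Finset.range k, X ^ i : F[X]).comp
        (X ^ (e * ((q - 1) / d)))) ^ t).eval c) ↔
      (Nat.gcd r s = 1 ∧ Nat.gcd k (p * d) = 1 ∧
        Nat.gcd (2 * r + (k - 1) * t * e * s) (2 * d) = 2) := by
  haveI := Fact.mk hp
  classical
  have hq2 : 2 ≤ q := hq ▸ Fintype.one_lt_card
  rw [← hs]
  set Hf : F → F := fun y => ∑ i ∈ Finset.range k, y ^ i with hHfdef
  have heval : (fun c : F =>
      (X ^ r * ((∑ i ∈ Finset.range k, X ^ i : F[X]).comp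
        (X ^ (e * s))) ^ t).eval c)
      = fun c : F => c ^ r * (Hf (c ^ (e * s))) ^ t := by
    funext c
    simp [Hf, eval_finset_sum]
  rw [heval]
  set fF : F → F := fun c => c ^ r * (Hf (c ^ (e * s))) ^ t with hfFdef
  -- basic numerics
  have hsd : s * d = q - 1 := by rw [hs]; exact Nat.div_mul_cancel hdvd
  have hs0 : 0 < s := by
    rcases Nat.eq_zero_or_pos s with h | h
    · rw [h, zero_mul] at hsd; omega
    · exact h
  obtain ⟨ℓ, a, hℓprime, ha, hq0eq⟩ := hq0
  have hℓ : ℓ.Prime := Nat.prime_iff.mpr hℓprime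
  obtain ⟨n, -, hcard⟩ := FiniteField.card F p
  have hm0 : m ≠ 0 := by
    rintro rfl
    rw [pow_zero] at hqm; omega
  have hq02 : 2 ≤ q0 := by
    rw [← hq0eq]
    exact hℓ.two_le.trans (Nat.le_self_pow ha.ne' ℓ)
  have hℓp : ℓ = p := by
    have h1 : ℓ ∣ q := by
      rw [hqm, ← hq0eq, ← pow_mul]
      exact dvd_pow_self ℓ (by positivity)
    rw [← hq, hcard] at h1
    exact (Nat.prime_dvd_prime_iff_eq hℓ hp).mp (hℓ.dvd_of_dvd_pow h1)
  subst hℓp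
  -- decomposition of q - 1
  obtain ⟨u, hu⟩ := hme
  have hu0 : 0 < u := by omega
  set N : ℕ := ∑ j ∈ Finset.range u, (q0 ^ 2) ^ j with hN
  set c0 : ℕ := (q0 + 1) / d with hc0def
  have hc0 : d * c0 = q0 + 1 := Nat.mul_div_cancel' hcong
  set M : ℕ := c0 * N with hM
  have hgeom : ((q0 : ℤ) ^ 2 - 1) * (N : ℤ) = (q : ℤ) - 1 := by
    have h1 := geom_sum_mul ((q0 : ℤ) ^ 2) u
    have h2 : ((q0 : ℤ) ^ 2) ^ u = (q : ℤ) := by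
      rw [hqm, ← pow_mul]
      push_cast
      congr 1
      omega
    have h3 : ((N : ℤ)) = ∑ i ∈ Finset.range u, ((q0 : ℤ) ^ 2) ^ i := by
      rw [hN]; push_cast; rfl
    rw [h3, mul_comm]
    rw [h1, h2]
  have hc0' : (d : ℤ) * (c0 : ℤ) = (q0 : ℤ) + 1 := by exact_mod_cast hc0
  have hsM : s = (q0 - 1) * M := by
    have key : ((q0 - 1) * M) * d = q - 1 := by
      have : ((((q0 - 1) * M) * d : ℕ) : ℤ) = ((q - 1 : ℕ) : ℤ) := by
        push_cast [Nat.cast_sub (by omega : 1 ≤ q0), Nat.cast_sub (by omega : 1 ≤ q)]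
        rw [hM]
        push_cast
        linear_combination ((q0 : ℤ) - 1) * (N : ℤ) * hc0' + hgeom
      exact_mod_cast this
    exact Nat.eq_of_mul_eq_mul_right hd (hsd.trans key.symm)
  -- units setup
  have hcardU : Fintype.card Fˣ = q - 1 := by rw [Fintype.card_units, hq]
  obtain ⟨γ, hγ⟩ := IsCyclic.exists_generator (α := Fˣ)
  have hordγ : orderOf γ = q - 1 := by
    rw [orderOf_eq_card_of_forall_mem_zpowers hγ, Nat.card_eq_fintype_card, hcardU]
  have hpow_card : ∀ x : Fˣ, x ^ (q - 1) = 1 := fun x => by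
    rw [← hcardU]; exact pow_card_eq_one
  -- Frobenius-type facts
  have hfrob : ∀ x : F, (Hf x) ^ q0 = Hf (x ^ q0) := by
    intro x
    rw [← hq0eq]
    simp only [Hf]
    rw [show ((∑ i ∈ Finset.range k, x ^ i) ^ ℓ ^ a
        = ∑ i ∈ Finset.range k, (x ^ i) ^ ℓ ^ a) from by
      simpa only [iterateFrobenius_def] using
        map_sum (iterateFrobenius F ℓ a) (fun i => x ^ i) (Finset.range k)]
    exact Finset.sum_congr rfl fun i _ => by rw [← pow_mul, ← pow_mul, mul_comm]
  have hq0inv : ∀ y : Fˣ, y ^ d = 1 → y ^ q0 = y⁻¹ := by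
    intro y hy
    have h1 : y ^ (q0 + 1) = 1 := by
      rw [← hc0, pow_mul, hy, one_pow]
    rw [pow_succ] at h1
    exact eq_inv_of_mul_eq_one_left h1
  have hreflect : ∀ y : Fˣ, Hf ((y⁻¹ : Fˣ) : F) * (y : F) ^ (k - 1) = Hf (y : F) := by
    intro y
    simp only [Hf, Finset.sum_mul]
    rw [← Finset.sum_range_reflect (fun i => (y : F) ^ i) k]
    apply Finset.sum_congr rfl
    intro i hi
    rw [Finset.mem_range] at hi
    have hy0 : (y : F) ≠ 0 := Units.ne_zero y
    rw [Units.val_inv_eq_inv_val, inv_pow]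
    rw [show (k - 1 : ℕ) = i + (k - 1 - i) from by omega, pow_add]
    field_simp
    rw [Nat.add_sub_cancel_left]
  have hHs : ∀ y : Fˣ, y ^ d = 1 → Hf (y : F) ≠ 0 →
      (Hf (y : F)) ^ s * (y : F) ^ ((k - 1) * M) = 1 := by
    intro y hy hy0
    have h2' : (y : F) ^ q0 = ((y : F))⁻¹ := by
      rw [← Units.val_pow_eq_pow_val, hq0inv y hy, Units.val_inv_eq_inv_val]
    have hr' : Hf ((y : F)⁻¹) * (y : F) ^ (k - 1) = Hf (y : F) := by
      rw [← Units.val_inv_eq_inv_val]; exact hreflect y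
    have h1 : (Hf (y : F)) ^ q0 * (y : F) ^ (k - 1) = Hf (y : F) := by
      rw [hfrob, h2', hr']
    have h2 : (Hf (y : F)) ^ (q0 - 1) * (y : F) ^ (k - 1) = 1 := by
      have hq01 : q0 = (q0 - 1) + 1 := by omega
      rw [hq01, pow_succ] at h1
      apply mul_right_cancel₀ hy0
      rw [one_mul]
      calc (Hf (y : F)) ^ (q0 - 1) * (y : F) ^ (k - 1) * Hf (y : F)
          = (Hf (y : F)) ^ (q0 - 1) * Hf (y : F) * (y : F) ^ (k - 1) := by ring
        _ = Hf (y : F) := h1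
    calc (Hf (y : F)) ^ s * (y : F) ^ ((k - 1) * M)
        = ((Hf (y : F)) ^ (q0 - 1)) ^ M * ((y : F) ^ (k - 1)) ^ M := by
          rw [hsM, pow_mul (Hf (y : F)) (q0 - 1) M, pow_mul (y : F) (k - 1) M]
      _ = ((Hf (y : F)) ^ (q0 - 1) * (y : F) ^ (k - 1)) ^ M := (mul_pow _ _ _).symm
      _ = 1 := by rw [h2, one_pow]
  -- nonvanishing of Hf on μ_d
  have hnv : Nat.gcd k (ℓ * d) = 1 → ∀ y : Fˣ, y ^ d = 1 → Hf (y : F) ≠ 0 := by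
    intro hgcd y hy
    by_cases h1 : (y : F) = 1
    · rw [h1]
      simp only [Hf, one_pow, Finset.sum_const, Finset.card_range, nsmul_eq_mul, mul_one]
      have hpk : ¬ ℓ ∣ k := by
        intro hpk
        have h2 : ℓ ∣ Nat.gcd k (ℓ * d) := Nat.dvd_gcd hpk ⟨d, rfl⟩
        rw [hgcd] at h2
        exact hℓ.one_lt.ne' (Nat.eq_one_of_dvd_one h2)
      exact fun h => hpk ((CharP.cast_eq_zero_iff F ℓ k).mp h)
    · intro h0
      have hyk : (y : F) ^ k = 1 := by
        have h2 := geom_sum_mul (y : F) k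
        rw [show (∑ i ∈ Finset.range k, (y : F) ^ i) = Hf (y : F) from rfl, h0,
          zero_mul] at h2
        exact sub_eq_zero.mp h2.symm
      have hyku : y ^ k = 1 := Units.ext (by push_cast; exact hyk)
      have h2 : orderOf y ∣ Nat.gcd k d :=
        Nat.dvd_gcd (orderOf_dvd_of_pow_eq_one hyku) (orderOf_dvd_of_pow_eq_one hy)
      have h3 : Nat.gcd k d ∣ Nat.gcd k (ℓ * d) :=
        Nat.dvd_gcd (Nat.gcd_dvd_left _ _) ((Nat.gcd_dvd_right k d).trans ⟨ℓ, mul_comm _ _⟩)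
      rw [hgcd] at h3
      have h4 : orderOf y = 1 := Nat.eq_one_of_dvd_one (h2.trans h3)
      exact h1 (by rw [orderOf_eq_one_iff.mp h4, Units.val_one])
  -- surjectivity of the s-power map onto μ_d
  have hsurj : ∀ x : Fˣ, x ^ d = 1 → ∃ c : Fˣ, c ^ s = x := by
    intro x hx
    obtain ⟨j, hj0⟩ := hγ x
    have hj : γ ^ j = x := hj0
    have h1 : γ ^ (j * d) = 1 := by
      rw [← hj, ← zpow_natCast (γ ^ j) d, ← zpow_mul] at hx
      exact hx
    have h2 : ((q - 1 : ℕ) : ℤ) ∣ j * d := by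
      rw [← hordγ]
      exact orderOf_dvd_iff_zpow_eq_one.mpr h1
    obtain ⟨w, hw⟩ := h2
    have hsd' : ((q - 1 : ℕ) : ℤ) = (s : ℤ) * (d : ℤ) := by exact_mod_cast hsd.symm
    have h3 : j = (s : ℤ) * w := by
      apply mul_right_cancel₀ (show (d : ℤ) ≠ 0 by exact_mod_cast hd.ne')
      rw [hw, hsd']; ring
    exact ⟨γ ^ w, by rw [← zpow_natCast (γ ^ w) s, ← zpow_mul, mul_comm, ← h3, hj]⟩
  have hq1' : ∀ x : F, x ≠ 0 → x ^ (q - 1) = 1 := fun x hx => by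
    rw [← hq]; exact FiniteField.pow_card_sub_one_eq_one x hx
  set Bn : ℕ := r + (k - 1) * e * t * M * (d - 1) with hBn
  have hmu : ∀ c : Fˣ, (c ^ (e * s)) ^ d = 1 := by
    intro c
    rw [← pow_mul, show e * s * d = (q - 1) * e from by rw [← hsd]; ring, pow_mul,
      hpow_card, one_pow]
  have hkey : ∀ c : Fˣ, Hf ((c : F) ^ (e * s)) ≠ 0 →
      (fF ((c : F))) ^ s = ((c : F) ^ s) ^ Bn := by
    intro c h0
    have hval : ((c ^ (e * s) : Fˣ) : F) = (c : F) ^ (e * s) := by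
      rw [Units.val_pow_eq_pow_val]
    have h1 := hHs (c ^ (e * s)) (hmu c) (by rw [hval]; exact h0)
    rw [hval] at h1
    rw [← pow_mul] at h1
    have hc0'' : (c : F) ≠ 0 := Units.ne_zero c
    have hcq : (c : F) ^ (q - 1) = 1 := hq1' _ hc0''
    simp only [hfFdef]
    apply mul_right_cancel₀ (pow_ne_zero (e * s * ((k - 1) * M) * t) hc0'')
    have hexp : s * Bn + e * s * ((k - 1) * M) * t
        = r * s + (q - 1) * ((k - 1) * e * t * M) := by
      have hdd : (d - 1) + 1 = d := by omega
      calc s * Bn + e * s * ((k - 1) * M) * t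
          = s * r + s * ((k - 1) * e * t * M) * ((d - 1) + 1) := by rw [hBn]; ring
        _ = r * s + (s * d) * ((k - 1) * e * t * M) := by rw [hdd]; ring
        _ = r * s + (q - 1) * ((k - 1) * e * t * M) := by rw [hsd]
    calc ((c : F) ^ r * Hf ((c : F) ^ (e * s)) ^ t) ^ s
          * (c : F) ^ (e * s * ((k - 1) * M) * t)
        = (c : F) ^ (r * s)
          * (Hf ((c : F) ^ (e * s)) ^ s * (c : F) ^ (e * s * ((k - 1) * M))) ^ t := by
          ring
      _ = (c : F) ^ (r * s) := by rw [h1, one_pow, mul_one]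
      _ = ((c : F) ^ s) ^ Bn * (c : F) ^ (e * s * ((k - 1) * M) * t) := by
          rw [← pow_mul, ← pow_add, hexp, pow_add, pow_mul (c : F) (q - 1), hcq,
            one_pow, mul_one]
  have hords : orderOf (γ ^ s) = d := by
    rw [orderOf_pow' γ hs0.ne', hordγ, ← hsd, Nat.gcd_comm,
      Nat.gcd_eq_left (dvd_mul_right s d), Nat.mul_div_cancel_left d hs0]
  -- bridge between the two gcd conditions
  have hAB : Nat.gcd k (ℓ * d) = 1 →
      (Nat.gcd (2 * r + (k - 1) * t * e * s) (2 * d) = 2 ↔ Nat.gcd Bn d = 1) := by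
    intro hgcd
    have hpar : (2 : ℤ) ∣ ((k - 1 : ℕ) : ℤ) * (2 - (c0 : ℤ)) := by
      rcases Nat.even_or_odd k with hke | hko
      · have hd2 : ¬ 2 ∣ d := by
          intro h2d
          have h2 : 2 ∣ Nat.gcd k (ℓ * d) := Nat.dvd_gcd hke.two_dvd (h2d.mul_left ℓ)
          omega
        have hl2 : ℓ ≠ 2 := by
          rintro rfl
          have h2 : 2 ∣ Nat.gcd k (2 * d) := Nat.dvd_gcd hke.two_dvd ⟨d, rfl⟩
          omega
        have hq0odd : ¬ 2 ∣ q0 := by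
          rw [← hq0eq]
          intro h2
          exact hl2 ((Nat.prime_dvd_prime_iff_eq Nat.prime_two hℓ).mp
            (Nat.prime_two.dvd_of_dvd_pow h2)).symm
        have hc0even : 2 ∣ c0 := by
          have h2 : 2 ∣ d * c0 := by rw [hc0]; omega
          rcases (Nat.prime_two.dvd_mul).mp h2 with h | h
          · exact absurd h hd2
          · exact h
        have h4 : (2 : ℤ) ∣ (2 - (c0 : ℤ)) :=
          dvd_sub (dvd_refl 2) (by exact_mod_cast hc0even)
        exact h4.mul_left _
      · have h2 : (2 : ℤ) ∣ ((k - 1 : ℕ) : ℤ) := by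
          have : 2 ∣ (k - 1) := by
            obtain ⟨w, hw⟩ := hko; omega
          exact_mod_cast Int.natCast_dvd_natCast.mpr this
        exact h2.mul_right _
    obtain ⟨w2, hw2⟩ := hpar
    have hsM' : (s : ℤ) = ((q0 : ℤ) - 1) * (M : ℤ) := by
      rw [hsM]
      push_cast [Nat.cast_sub (by omega : 1 ≤ q0)]
      ring
    have hrel : 2 * (Bn : ℤ) = ((2 * r + (k - 1) * t * e * s : ℕ) : ℤ)
        + (2 * (d : ℤ)) * ((t : ℤ) * e * M * w2) := by
      have hd1 : ((d - 1 : ℕ) : ℤ) = (d : ℤ) - 1 := by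
        push_cast [Nat.cast_sub (by omega : 1 ≤ d)]; ring
      push_cast [hBn, hd1]
      rw [hsM']
      linear_combination ((t : ℤ) * e * M * ((k - 1 : ℕ) : ℤ)) * hc0'
        + ((t : ℤ) * e * M * (d : ℤ)) * hw2
    have main : Nat.gcd (2 * r + (k - 1) * t * e * s) (2 * d) = 2 * Nat.gcd Bn d := by
      have h1 : Nat.gcd (2 * r + (k - 1) * t * e * s) (2 * d)
          = Int.gcd ((2 * r + (k - 1) * t * e * s : ℕ) : ℤ) (2 * (d : ℤ)) := by
        rw [show (2 * (d : ℤ)) = ((2 * d : ℕ) : ℤ) from by push_cast; ring,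
          Int.gcd_natCast_natCast]
      have h2 : Int.gcd (2 * (Bn : ℤ)) (2 * (d : ℤ))
          = Int.gcd ((2 * r + (k - 1) * t * e * s : ℕ) : ℤ) (2 * (d : ℤ)) := by
        rw [hrel]
        exact int_gcd_shift _ _ _
      have h3 : Int.gcd (2 * (Bn : ℤ)) (2 * (d : ℤ)) = 2 * Nat.gcd Bn d := by
        rw [Int.gcd_mul_left]
        norm_num [Int.gcd_natCast_natCast]
      rw [h1, ← h2, h3]
    rw [main]
    omega
  have hfF0 : fF 0 = 0 := by
    simp only [hfFdef]
    rw [zero_pow hr.ne', zero_mul]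
  have hcsd1 : ∀ x : Fˣ, (x ^ s) ^ d = 1 := fun x => by
    rw [← pow_mul, hsd]; exact hpow_card x
  constructor
  · intro hbij
    have hinj := hbij.injective
    have hgcdk : Nat.gcd k (ℓ * d) = 1 := by
      by_contra hgcd
      obtain ⟨y, hyd, hy0⟩ : ∃ y : Fˣ, y ^ d = 1 ∧ Hf (y : F) = 0 := by
        obtain ⟨l', hl', hdvdg⟩ := Nat.exists_prime_and_dvd hgcd
        have hlk : l' ∣ k := hdvdg.trans (Nat.gcd_dvd_left _ _)
        have hlpd : l' ∣ ℓ * d := hdvdg.trans (Nat.gcd_dvd_right _ _)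
        rcases (Nat.Prime.dvd_mul hl').mp hlpd with hcase | hcase
        · have hl'p : l' = ℓ := (Nat.prime_dvd_prime_iff_eq hl' hℓ).mp hcase
          refine ⟨1, one_pow d, ?_⟩
          have hone : Hf ((1 : Fˣ) : F) = (k : F) := by
            simp [hHfdef]
          rw [hone]
          exact (CharP.cast_eq_zero_iff F ℓ k).mpr (hl'p ▸ hlk)
        · have hlq : l' ∣ q - 1 := hcase.trans hdvd
          set y := γ ^ ((q - 1) / l') with hydef
          have hordy : orderOf y = l' := by
            rw [hydef, orderOf_pow' γ
              (Nat.div_pos (Nat.le_of_dvd (by omega) hlq) hl'.pos).ne',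
              hordγ, Nat.gcd_eq_right (Nat.div_dvd_of_dvd hlq),
              Nat.div_div_self hlq (by omega)]
          have hyd : y ^ d = 1 := orderOf_dvd_iff_pow_eq_one.mp (hordy ▸ hcase)
          have hyk : y ^ k = 1 := orderOf_dvd_iff_pow_eq_one.mp (hordy ▸ hlk)
          have hyne : (y : F) ≠ 1 := by
            intro hy1
            have hyy : y = 1 := Units.ext (by rw [hy1, Units.val_one])
            rw [hyy, orderOf_one] at hordy
            exact hl'.one_lt.ne hordy
          refine ⟨y, hyd, ?_⟩
          have h2 := geom_sum_mul (y : F) k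
          have hyk' : (y : F) ^ k = 1 := by
            rw [← Units.val_pow_eq_pow_val, hyk, Units.val_one]
          rw [hyk', sub_self] at h2
          rcases mul_eq_zero.mp h2 with h | h
          · exact h
          · exact absurd (sub_eq_zero.mp h) hyne
      obtain ⟨z, hzd, hze⟩ : ∃ z : Fˣ, z ^ d = 1 ∧ z ^ e = y := by
        by_cases hd1 : d = 1
        · subst hd1
          rw [pow_one] at hyd
          exact ⟨1, one_pow _, by rw [one_pow, hyd]⟩
        · have hd2 : 1 < d := by omega
          obtain ⟨b, -, hb⟩ := Nat.exists_mul_mod_eq_one_of_coprime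
            (Nat.Coprime.symm hed) hd2
          refine ⟨y ^ b, by rw [← pow_mul, mul_comm b d, pow_mul, hyd, one_pow], ?_⟩
          rw [← pow_mul]
          have hmod : b * e = d * ((b * e) / d) + 1 := by
            rw [mul_comm b e]
            have hdm := Nat.div_add_mod (e * b) d
            omega
          rw [hmod, pow_add, pow_mul, hyd, one_pow, one_mul, pow_one]
      obtain ⟨c, hc⟩ := hsurj z hzd
      have h1 : fF (c : F) = 0 := by
        have hcy : (c : F) ^ (e * s) = (y : F) := by
          rw [mul_comm e s, pow_mul, ← Units.val_pow_eq_pow_val, hc,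
            ← Units.val_pow_eq_pow_val, hze]
        simp only [hfFdef]
        rw [hcy, hy0, zero_pow ht.ne', mul_zero]
      exact Units.ne_zero c (hinj (h1.trans hfF0.symm))
    have hgcdrs : Nat.gcd r s = 1 := by
      by_contra hgcd
      have hg0 : Nat.gcd r s ≠ 0 := fun h => by
        have := Nat.eq_zero_of_gcd_eq_zero_left h
        omega
      have hg1 : 1 < Nat.gcd r s := by omega
      set g := Nat.gcd r s with hg
      have hgs : g ∣ s := Nat.gcd_dvd_right r s
      have hgq : g ∣ q - 1 := hgs.trans ⟨d, hsd.symm⟩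
      set ζ := γ ^ ((q - 1) / g) with hζ
      have hordζ : orderOf ζ = g := by
        rw [hζ, orderOf_pow' γ
          (Nat.div_pos (Nat.le_of_dvd (by omega) hgq) (by omega)).ne',
          hordγ, Nat.gcd_eq_right (Nat.div_dvd_of_dvd hgq),
          Nat.div_div_self hgq (by omega)]
      have hζr : ζ ^ r = 1 := orderOf_dvd_iff_pow_eq_one.mp (hordζ ▸ Nat.gcd_dvd_left r s)
      have hζs : ζ ^ s = 1 := orderOf_dvd_iff_pow_eq_one.mp (hordζ ▸ hgs)
      have hζes : (ζ : F) ^ (e * s) = 1 := by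
        rw [mul_comm e s, pow_mul, ← Units.val_pow_eq_pow_val, hζs, Units.val_one,
          one_pow]
      have hζr' : (ζ : F) ^ r = 1 := by
        rw [← Units.val_pow_eq_pow_val, hζr, Units.val_one]
      have heq : fF (ζ : F) = fF 1 := by
        simp only [hfFdef]
        rw [hζes, hζr', one_pow, one_pow]
      have h2 : (ζ : F) = 1 := hinj heq
      have h3 : ζ = 1 := Units.ext (by rw [h2, Units.val_one])
      rw [h3, orderOf_one] at hordζ
      omega
    refine ⟨hgcdrs, hgcdk, ?_⟩
    rw [hAB hgcdk]
    obtain ⟨cF, hcF⟩ := hbij.surjective (γ : F)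
    have hcne : cF ≠ 0 := by
      intro h
      rw [h, hfF0] at hcF
      exact Units.ne_zero γ hcF.symm
    set c : Fˣ := Units.mk0 cF hcne with hcdef
    have h0 : Hf ((c : F) ^ (e * s)) ≠ 0 := by
      have := hnv hgcdk (c ^ (e * s)) (hmu c)
      rwa [Units.val_pow_eq_pow_val] at this
    have hck := hkey c h0
    have hckU : γ ^ s = (c ^ s) ^ Bn := by
      apply Units.ext
      rw [Units.val_pow_eq_pow_val, Units.val_pow_eq_pow_val, Units.val_pow_eq_pow_val]
      rw [← hcF]
      exact hck
    set g' := Nat.gcd Bn d with hg'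
    obtain ⟨B1, hB1⟩ := Nat.gcd_dvd_left Bn d
    obtain ⟨d1, hd1⟩ := Nat.gcd_dvd_right Bn d
    rw [← hg'] at hB1 hd1
    have hg'0 : 0 < g' := by
      rcases Nat.eq_zero_or_pos g' with h | h
      · rw [h, zero_mul] at hd1; omega
      · exact h
    have h3 : (γ ^ s) ^ d1 = 1 := by
      rw [hckU, ← pow_mul, hB1, show g' * B1 * d1 = d * B1 from by rw [hd1]; ring,
        pow_mul, hcsd1 c, one_pow]
    have h4 : d ∣ d1 := hords ▸ orderOf_dvd_of_pow_eq_one h3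
    have hd10 : 0 < d1 := by
      rcases Nat.eq_zero_or_pos d1 with h | h
      · rw [h, mul_zero] at hd1; omega
      · exact h
    have h5 := Nat.le_of_dvd hd10 h4
    have h6 : g' * d1 ≤ 1 * d1 := by rw [one_mul]; omega
    have h7 : g' ≤ 1 := Nat.le_of_mul_le_mul_right h6 hd10
    omega
  · rintro ⟨h1, h2, h3⟩
    have hBd : Nat.gcd Bn d = 1 := (hAB h2).mp h3
    rw [← Finite.injective_iff_bijective]
    intro aF bF hab
    have hnz : ∀ x : Fˣ, fF (x : F) ≠ 0 := by
      intro x hx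
      have h0 : Hf ((x : F) ^ (e * s)) ≠ 0 := by
        have := hnv h2 (x ^ (e * s)) (hmu x)
        rwa [Units.val_pow_eq_pow_val] at this
      simp only [hfFdef] at hx
      rcases mul_eq_zero.mp hx with h | h
      · exact Units.ne_zero x ((pow_eq_zero_iff hr.ne').mp h)
      · exact h0 ((pow_eq_zero_iff ht.ne').mp h)
    by_cases ha0 : aF = 0
    · by_cases hb0 : bF = 0
      · rw [ha0, hb0]
      · exfalso
        rw [ha0, hfF0] at hab
        exact hnz (Units.mk0 bF hb0) hab.symm
    · by_cases hb0 : bF = 0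
      · exfalso
        rw [hb0, hfF0] at hab
        exact hnz (Units.mk0 aF ha0) hab
      · set a : Fˣ := Units.mk0 aF ha0 with hadef
        set b : Fˣ := Units.mk0 bF hb0 with hbdef
        have h0a : Hf ((a : F) ^ (e * s)) ≠ 0 := by
          have := hnv h2 (a ^ (e * s)) (hmu a)
          rwa [Units.val_pow_eq_pow_val] at this
        have h0b : Hf ((b : F) ^ (e * s)) ≠ 0 := by
          have := hnv h2 (b ^ (e * s)) (hmu b)
          rwa [Units.val_pow_eq_pow_val] at this
        have hab' : fF (a : F) = fF (b : F) := hab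
        have hps : ((a : F) ^ s) ^ Bn = ((b : F) ^ s) ^ Bn := by
          rw [← hkey a h0a, ← hkey b h0b, hab']
        have hpsU : (a ^ s) ^ Bn = (b ^ s) ^ Bn := Units.ext (by
          rw [Units.val_pow_eq_pow_val, Units.val_pow_eq_pow_val,
            Units.val_pow_eq_pow_val, Units.val_pow_eq_pow_val]
          exact hps)
        have hx : (a ^ s * (b ^ s)⁻¹) ^ Bn = 1 := by
          rw [mul_pow, inv_pow, hpsU, mul_inv_cancel]
        have hxd : (a ^ s * (b ^ s)⁻¹) ^ d = 1 := by
          rw [mul_pow, inv_pow, hcsd1 a, hcsd1 b, inv_one, mul_one]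
        have hdvd1 : orderOf (a ^ s * (b ^ s)⁻¹) ∣ Nat.gcd Bn d :=
          Nat.dvd_gcd (orderOf_dvd_of_pow_eq_one hx) (orderOf_dvd_of_pow_eq_one hxd)
        rw [hBd] at hdvd1
        have hss : a ^ s = b ^ s := mul_inv_eq_one.mp
          (orderOf_eq_one_iff.mp (Nat.eq_one_of_dvd_one hdvd1))
        have hesab : (a : F) ^ (e * s) = (b : F) ^ (e * s) := by
          rw [mul_comm e s, pow_mul (a : F), pow_mul (b : F)]
          congr 1
          rw [← Units.val_pow_eq_pow_val, ← Units.val_pow_eq_pow_val, hss]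
        have hrr : (a : F) ^ r = (b : F) ^ r := by
          have hth := hab'
          simp only [hfFdef] at hth
          rw [hesab] at hth
          exact mul_right_cancel₀ (pow_ne_zero t h0b) hth
        have hrrU : a ^ r = b ^ r := Units.ext (by
          rw [Units.val_pow_eq_pow_val, Units.val_pow_eq_pow_val]; exact hrr)
        have hone : (a * b⁻¹) ^ r = 1 := by
          rw [mul_pow, inv_pow, hrrU, mul_inv_cancel]
        have hone2 : (a * b⁻¹) ^ s = 1 := by
          rw [mul_pow, inv_pow, hss, mul_inv_cancel]
        have hdvd2 : orderOf (a * b⁻¹) ∣ Nat.gcd r s :=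
          Nat.dvd_gcd (orderOf_dvd_of_pow_eq_one hone) (orderOf_dvd_of_pow_eq_one hone2)
        rw [h1] at hdvd2
        have hab1 : a = b := mul_inv_eq_one.mp
          (orderOf_eq_one_iff.mp (Nat.eq_one_of_dvd_one hdvd2))
        calc aF = (a : F) := rfl
          _ = (b : F) := by rw [hab1]
          _ = bF := rfl
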